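/- Let X and M be compact metric spaces, f : X × M → M a continuous map, and t₀ ∈ X. For each k let θ_k be a Borel probability measure on X and μ_k a Borel probability measure on M that is stationary for (f, θ_k). If θ_k converges weakly to the Dirac mass δ_{t₀} and μ_k converges weakly to a Borel probability measure μ, then μ is invariant under the map f_{t₀} = f(t₀, ·) : M → M, i.e. the pushforward of μ under f_{t₀} equals μ. -/
import Mathlib


open MeasureTheory Filter

lemma integrable_of_continuous_compact {α : Type*} [MeasurableSpace α] [TopologicalSpace α]
    [OpensMeasurableSpace α] [T2Space α] [CompactSpace α] {ν : Measure α} [IsFiniteMeasure ν]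
    {g : α → ℝ} (hg : Continuous g) : Integrable g ν :=
  hg.integrable_of_hasCompactSupport (HasCompactSupport.of_compactSpace g)

/-- Zero-noise limits of stationary measures are invariant measures for
the unperturbed map: if `μ_k` is stationary for `(f, θ_k)`, `θ_k → δ_{t₀}` weakly and
`μ_k → μ` weakly, then `μ` is invariant under `f_{t₀} = f (t₀, ·)`. -/
theorem zero_noise_limit_invariant
    {X M : Type*} [MetricSpace X] [CompactSpace X] [MeasurableSpace X] [BorelSpace X]
    [MetricSpace M] [CompactSpace M] [MeasurableSpace M] [BorelSpace M]
    (f : X × M → M) (hf : Continuous f) (t₀ : X)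
    (θ : ℕ → Measure X) [∀ k, IsProbabilityMeasure (θ k)]
    (μseq : ℕ → Measure M) [∀ k, IsProbabilityMeasure (μseq k)]
    (hstat : ∀ k, ∀ φ : C(M, ℝ),
      ∫ t, ∫ x, φ (f (t, x)) ∂(μseq k) ∂(θ k) = ∫ x, φ x ∂(μseq k))
    (hθ : ∀ ψ : C(X, ℝ), Tendsto (fun k => ∫ t, ψ t ∂(θ k)) atTop
      (nhds (∫ t, ψ t ∂(Measure.dirac t₀))))
    (μ : Measure M) [IsProbabilityMeasure μ]
    (hμ : ∀ φ : C(M, ℝ), Tendsto (fun k => ∫ x, φ x ∂(μseq k)) atTop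
      (nhds (∫ x, φ x ∂μ))) :
    Measure.map (fun x => f (t₀, x)) μ = μ := by
  have hft₀ : Continuous (fun x => f (t₀, x)) := hf.comp (continuous_const.prodMk continuous_id)
  -- key: for every continuous φ, ∫ φ ∘ f_{t₀} dμ = ∫ φ dμ
  have key : ∀ φ : C(M, ℝ), ∫ x, φ (f (t₀, x)) ∂μ = ∫ x, φ x ∂μ := by
    intro φ
    set g : C(M, ℝ) := φ.comp ⟨fun x => f (t₀, x), hft₀⟩ with hgdef
    have hb : Tendsto (fun k => ∫ x, g x ∂(μseq k)) atTop (nhds (∫ x, g x ∂μ)) := hμ g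
    have ha : Tendsto (fun k => ∫ x, φ x ∂(μseq k)) atTop (nhds (∫ x, φ x ∂μ)) := hμ φ
    have hdiff : Tendsto (fun k => (∫ x, φ x ∂(μseq k)) - ∫ x, g x ∂(μseq k)) atTop (nhds 0) := by
      rw [NormedAddCommGroup.tendsto_nhds_zero]
      intro ε hε
      -- uniform continuity of φ ∘ f
      have hΦ : Continuous (fun p : X × M => φ (f p)) := φ.continuous.comp hf
      have hΦu : UniformContinuous (fun p : X × M => φ (f p)) :=
        CompactSpace.uniformContinuous_of_continuous hΦ
      obtain ⟨δ, hδ, hδ'⟩ := Metric.uniformContinuous_iff.mp hΦu (ε / 4) (by positivity)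
      set C : ℝ := ‖φ‖ with hCdef
      have hC0 : (0 : ℝ) ≤ C := norm_nonneg _
      have hψc : Continuous (fun t : X => ε / 4 + 2 * C * min 1 (dist t t₀ / δ)) := by
        apply continuous_const.add
        exact continuous_const.mul (continuous_const.min ((continuous_id.dist
          continuous_const).div_const δ))
      set ψ : C(X, ℝ) := ⟨fun t => ε / 4 + 2 * C * min 1 (dist t t₀ / δ), hψc⟩ with hψdef
      -- pointwise bound
      have hpt : ∀ t x, ‖φ (f (t, x)) - φ (f (t₀, x))‖ ≤ ψ t := by
        intro t x
        have hmin0 : (0:ℝ) ≤ min 1 (dist t t₀ / δ) :=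
          le_min zero_le_one (by positivity)
        rcases lt_or_ge (dist t t₀) δ with h | h
        · have hd : dist ((t, x) : X × M) (t₀, x) < δ := by
            rw [Prod.dist_eq]
            simpa [dist_self] using max_lt h hδ
          have h2 := hδ' hd
          rw [dist_eq_norm] at h2
          have : 0 ≤ 2 * C * min 1 (dist t t₀ / δ) := by positivity
          show ‖_‖ ≤ ε / 4 + 2 * C * min 1 (dist t t₀ / δ)
          linarith [h2.le]
        · have hmin : min 1 (dist t t₀ / δ) = 1 := min_eq_left ((one_le_div hδ).mpr h)
          have hb2 : ‖φ (f (t, x)) - φ (f (t₀, x))‖ ≤ 2 * C := by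
            calc ‖φ (f (t, x)) - φ (f (t₀, x))‖
                ≤ ‖φ (f (t, x))‖ + ‖φ (f (t₀, x))‖ := norm_sub_le _ _
              _ ≤ C + C := add_le_add (φ.norm_coe_le_norm _) (φ.norm_coe_le_norm _)
              _ = 2 * C := by ring
          show ‖_‖ ≤ ε / 4 + 2 * C * min 1 (dist t t₀ / δ)
          rw [hmin]
          linarith [hε.le]
      -- ∫ ψ dθ_k → ε/4
      have hψt₀ : ∫ t, ψ t ∂(Measure.dirac t₀) = ε / 4 := by
        rw [integral_dirac]
        simp [hψdef]
      have hconv := hθ ψ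
      rw [hψt₀] at hconv
      have hev : ∀ᶠ k in atTop, ∫ t, ψ t ∂(θ k) < ε / 2 := by
        have := hconv.eventually (eventually_lt_nhds (by linarith : (ε/4 : ℝ) < ε/2))
        exact this
      filter_upwards [hev] with k hk
      -- rewrite using stationarity
      have hI : Continuous (fun t => ∫ x, φ (f (t, x)) ∂(μseq k)) := by
        have := continuous_parametric_integral_of_continuous
          (μ := μseq k) (f := fun t x => φ (f (t, x))) (by exact hΦ) isCompact_univ
        simpa [Measure.restrict_univ] using this
      have hIint : Integrable (fun t => ∫ x, φ (f (t, x)) ∂(μseq k)) (θ k) :=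
        integrable_of_continuous_compact hI
      have hconst : ∫ (_ : X), (∫ x, φ (f (t₀, x)) ∂(μseq k)) ∂(θ k)
          = ∫ x, φ (f (t₀, x)) ∂(μseq k) := by
        rw [integral_const]; simp
      have hrw : (∫ x, φ x ∂(μseq k)) - ∫ x, g x ∂(μseq k)
          = ∫ t, ((∫ x, φ (f (t, x)) ∂(μseq k)) - ∫ x, φ (f (t₀, x)) ∂(μseq k)) ∂(θ k) := by
        rw [integral_sub hIint (integrable_const _), hconst, hstat k φ]
        rfl
      rw [hrw]
      -- bound the integral by ∫ ψ
      have hbd : ∀ t, ‖(∫ x, φ (f (t, x)) ∂(μseq k)) - ∫ x, φ (f (t₀, x)) ∂(μseq k)‖ ≤ ψ t := by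
        intro t
        have h1 : Integrable (fun x => φ (f (t, x))) (μseq k) :=
          integrable_of_continuous_compact (φ.continuous.comp
            (hf.comp (continuous_const.prodMk continuous_id)))
        have h2 : Integrable (fun x => φ (f (t₀, x))) (μseq k) :=
          integrable_of_continuous_compact (φ.continuous.comp hft₀)
        rw [← integral_sub h1 h2]
        have := norm_integral_le_of_norm_le (μ := μseq k)
          (f := fun x => φ (f (t, x)) - φ (f (t₀, x))) (g := fun _ => ψ t)
          (integrable_const _) (Eventually.of_forall fun x => hpt t x)
        simpa using this
      calc ‖∫ t, ((∫ x, φ (f (t, x)) ∂(μseq k)) - ∫ x, φ (f (t₀, x)) ∂(μseq k)) ∂(θ k)‖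
          ≤ ∫ t, ψ t ∂(θ k) := norm_integral_le_of_norm_le
            (integrable_of_continuous_compact ψ.continuous)
            (Eventually.of_forall hbd)
        _ < ε / 2 := hk
        _ < ε := by linarith
    have := ha.sub hb
    have h0 := tendsto_nhds_unique this hdiff
    have : ∫ x, g x ∂μ = ∫ x, φ x ∂μ := by linarith [sub_eq_zero.mp h0]
    simpa [hgdef] using this
  -- conclude equality of measures
  haveI : IsProbabilityMeasure (Measure.map (fun x => f (t₀, x)) μ) :=
    Measure.isProbabilityMeasure_map hft₀.measurable.aemeasurable
  apply ext_of_forall_lintegral_eq_of_IsFiniteMeasure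
  intro g
  have hgi : Integrable (fun x => (g x : ℝ)) μ :=
    integrable_of_continuous_compact (NNReal.continuous_coe.comp g.continuous)
  have hgi' : Integrable (fun x => (g (f (t₀, x)) : ℝ)) μ :=
    integrable_of_continuous_compact ((NNReal.continuous_coe.comp g.continuous).comp hft₀)
  have hmap := lintegral_map (μ := μ)
    (by fun_prop : Measurable fun x : M => (g x : ENNReal)) hft₀.measurable
  rw [hmap]
  rw [lintegral_coe_eq_integral _ hgi, lintegral_coe_eq_integral _ hgi']
  congr 1
  exact key ⟨fun x => (g x : ℝ), NNReal.continuous_coe.comp g.continuous⟩
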